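/- The period-two orbits of the quadratic map f(x,y,z)=(x+y, y+z−ε+μy+P(x,y), z−ε+μy+P(x,y)), P(x,y)=ax²+bxy+cy², with a≠b, are exactly the orbits {(x,y,z),(x+y,−y,−z)} where (x,y,z) = ((μ+4∓ρ)/(a−b), ±2ρ/(a−b), ±4ρ/(a−b)) and ρ² = ((a−b)²ε − a(μ+4)²)/(a−2b+4c), provided the right-hand side is positive; in particular f has at most one period-two orbit (up to the two points on it). -/

import Mathlib

/-- The quadratic normal-form map. -/
def henonMap (a b c ε μ : ℝ) : ℝ × ℝ × ℝ → ℝ × ℝ × ℝ :=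
  fun p =>
    (p.1 + p.2.1,
     p.2.1 + p.2.2 - ε + μ * p.2.1 + (a * p.1 ^ 2 + b * p.1 * p.2.1 + c * p.2.1 ^ 2),
     p.2.2 - ε + μ * p.2.1 + (a * p.1 ^ 2 + b * p.1 * p.2.1 + c * p.2.1 ^ 2))

private lemma henon_step (a b c ε μ x y z : ℝ)
    (h1 : a * x ^ 2 + b * x * y + c * y ^ 2 + (μ + 4) * y = ε) (hz : z = 2 * y) :
    henonMap a b c ε μ (x, y, z) = (x + y, -y, -z) := by
  simp only [henonMap, Prod.mk.injEq]
  exact ⟨by trivial, by linear_combination h1 + hz, by linear_combination h1 + 2 * hz⟩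

/-- When `a ≠ b` and `ρ² = ((a−b)²ε − a(μ+4)²)/(a−2b+4c) > 0`, the period-two points of
`f` are exactly the two points `((μ+4∓ρ)/(a−b), ±2ρ/(a−b), ±4ρ/(a−b))`, which are
exchanged by `f`; in particular `f` has at most one period-two orbit. -/
theorem henonMap_period_two_orbit (a b c ε μ ρ : ℝ) (hab : a ≠ b)
    (hden : a - 2 * b + 4 * c ≠ 0)
    (hpos : 0 < ((a - b) ^ 2 * ε - a * (μ + 4) ^ 2) / (a - 2 * b + 4 * c))
    (hρ : ρ = Real.sqrt (((a - b) ^ 2 * ε - a * (μ + 4) ^ 2) / (a - 2 * b + 4 * c))) :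
    henonMap a b c ε μ ((μ + 4 - ρ) / (a - b), 2 * ρ / (a - b), 4 * ρ / (a - b)) =
      ((μ + 4 + ρ) / (a - b), -(2 * ρ) / (a - b), -(4 * ρ) / (a - b)) ∧
    henonMap a b c ε μ ((μ + 4 + ρ) / (a - b), -(2 * ρ) / (a - b), -(4 * ρ) / (a - b)) =
      ((μ + 4 - ρ) / (a - b), 2 * ρ / (a - b), 4 * ρ / (a - b)) ∧
    (∀ ξ : ℝ × ℝ × ℝ,
      (henonMap a b c ε μ (henonMap a b c ε μ ξ) = ξ ∧ henonMap a b c ε μ ξ ≠ ξ) ↔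
        (ξ = ((μ + 4 - ρ) / (a - b), 2 * ρ / (a - b), 4 * ρ / (a - b)) ∨
         ξ = ((μ + 4 + ρ) / (a - b), -(2 * ρ) / (a - b), -(4 * ρ) / (a - b)))) := by
  have hab' : a - b ≠ 0 := sub_ne_zero.mpr hab
  have hρpos : 0 < ρ := by rw [hρ]; exact Real.sqrt_pos.mpr hpos
  have hr : (a - 2 * b + 4 * c) * ρ ^ 2 = (a - b) ^ 2 * ε - a * (μ + 4) ^ 2 := by
    rw [hρ, Real.sq_sqrt hpos.le]; field_simp
  have e1 : a * ((μ + 4 - ρ) / (a - b)) ^ 2 + b * ((μ + 4 - ρ) / (a - b)) * (2 * ρ / (a - b))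
      + c * (2 * ρ / (a - b)) ^ 2 + (μ + 4) * (2 * ρ / (a - b)) = ε := by
    field_simp
    linear_combination hr
  have e2 : a * ((μ + 4 + ρ) / (a - b)) ^ 2 + b * ((μ + 4 + ρ) / (a - b)) * (-(2 * ρ) / (a - b))
      + c * (-(2 * ρ) / (a - b)) ^ 2 + (μ + 4) * (-(2 * ρ) / (a - b)) = ε := by
    field_simp
    linear_combination hr
  have c1 : henonMap a b c ε μ ((μ + 4 - ρ) / (a - b), 2 * ρ / (a - b), 4 * ρ / (a - b)) =
      ((μ + 4 + ρ) / (a - b), -(2 * ρ) / (a - b), -(4 * ρ) / (a - b)) := by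
    rw [henon_step a b c ε μ _ _ _ e1 (by ring)]
    simp only [Prod.mk.injEq]
    refine ⟨by ring, by ring, by ring⟩
  have c2 : henonMap a b c ε μ ((μ + 4 + ρ) / (a - b), -(2 * ρ) / (a - b), -(4 * ρ) / (a - b)) =
      ((μ + 4 - ρ) / (a - b), 2 * ρ / (a - b), 4 * ρ / (a - b)) := by
    rw [henon_step a b c ε μ _ _ _ e2 (by ring)]
    simp only [Prod.mk.injEq]
    refine ⟨by ring, by ring, by ring⟩
  refine ⟨c1, c2, ?_⟩
  intro ξ
  constructor
  · rintro ⟨h, hne⟩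
    obtain ⟨x, y, z⟩ := ξ
    obtain ⟨⟨u, v, w⟩, hA⟩ : ∃ p : ℝ × ℝ × ℝ, henonMap a b c ε μ (x, y, z) = p := ⟨_, rfl⟩
    rw [hA] at h hne
    simp only [henonMap, Prod.mk.injEq] at hA h
    obtain ⟨A1, A2, A3⟩ := hA
    obtain ⟨B1, B2, B3⟩ := h
    subst A1
    have hv : v = -y := by linear_combination B1
    subst hv
    have hw : w = -(2 * y) := by linear_combination A2 - A3
    subst hw
    have hz : z = 2 * y := by linear_combination B2 - B3
    subst hz
    have hy : y ≠ 0 := by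
      intro h0
      apply hne
      rw [h0]
      norm_num
    have h1 : a * x ^ 2 + b * x * y + c * y ^ 2 + (μ + 4) * y = ε := by
      linear_combination A3
    have h1' : a * (x + y) ^ 2 - b * (x + y) * y + c * y ^ 2 = ε + (μ + 4) * y := by
      linear_combination B3
    have hx : 2 * (a - b) * x + (a - b) * y - 2 * (μ + 4) = 0 := by
      apply mul_left_cancel₀ hy
      linear_combination h1' - h1
    have hyy : (a - 2 * b + 4 * c) * (((a - b) * y) ^ 2) =
        (a - 2 * b + 4 * c) * ((2 * ρ) ^ 2) := by
      linear_combination 2 * (a - b) ^ 2 * h1 + 2 * (a - b) ^ 2 * h1'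
        - a * (2 * (a - b) * x + (a - b) * y + 2 * (μ + 4)) * hx - 4 * hr
    have hy2 : ((a - b) * y - 2 * ρ) * ((a - b) * y + 2 * ρ) = 0 := by
      have hcc := mul_left_cancel₀ hden hyy
      linear_combination hcc
    rcases mul_eq_zero.mp hy2 with hc | hc
    · left
      simp only [Prod.mk.injEq]
      refine ⟨?_, ?_, ?_⟩ <;> rw [eq_div_iff hab']
      · linear_combination (1/2) * hx - (1/2) * hc
      · linear_combination hc
      · linear_combination 2 * hc
    · right
      simp only [Prod.mk.injEq]
      refine ⟨?_, ?_, ?_⟩ <;> rw [eq_div_iff hab']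
      · linear_combination (1/2) * hx - (1/2) * hc
      · linear_combination hc
      · linear_combination 2 * hc
  · rintro (rfl | rfl)
    · refine ⟨by rw [c1, c2], ?_⟩
      rw [c1]
      intro he
      have h2 := congrArg (fun p : ℝ × ℝ × ℝ => p.2.1) he
      simp only at h2
      rw [div_eq_div_iff hab' hab'] at h2
      have h3 : ρ * (a - b) = 0 := by linear_combination (-(1:ℝ)/4) * h2
      rcases mul_eq_zero.mp h3 with h | h
      · exact absurd h (ne_of_gt hρpos)
      · exact hab' h
    · refine ⟨by rw [c2, c1], ?_⟩
      rw [c2]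
      intro he
      have h2 := congrArg (fun p : ℝ × ℝ × ℝ => p.2.1) he
      simp only at h2
      rw [div_eq_div_iff hab' hab'] at h2
      have h3 : ρ * (a - b) = 0 := by linear_combination ((1:ℝ)/4) * h2
      rcases mul_eq_zero.mp h3 with h | h
      · exact absurd h (ne_of_gt hρpos)
      · exact hab' h
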